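/- arXiv:1906.05944 — 4 statements merged into one kernel-verified Lean document; each statement's English description precedes it below -/
import Mathlib

section
/- Let k be a bounded kernel and let P^n and Q^m be empirical measures of n points x_1,...,x_n and m points y_1,...,y_m respectively. Then |MMD_{U,U}^2(P^n || Q^m) - MMD^2(P^n || Q^m)| ≤ 2(1/m + 1/n) * sup_{x∈X} k(x,x), where MMD_{U,U}^2 replaces both diagonal-inclusive double sums by their U-statistic (off-diagonal) versions. -/
open Finset

lemma mmd_diag_key {X : Type*} (k : X → X → ℝ) (B : ℝ)
    (hkB : ∀ a b : X, |k a b| ≤ B)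
    (N : ℕ) (hN : 2 ≤ N) (z : Fin N → X) :
    |(1 / ((N : ℝ) * ((N : ℝ) - 1))) * ∑ i : Fin N, ∑ j : Fin N,
        (if i ≠ j then k (z i) (z j) else 0)
      - (1 / ((N : ℝ)^2)) * ∑ i : Fin N, ∑ j : Fin N, k (z i) (z j)|
      ≤ 2 / (N : ℝ) * B := by
  have hB : 0 ≤ B := le_trans (abs_nonneg _) (hkB (z ⟨0, by omega⟩) (z ⟨0, by omega⟩))
  set Nr : ℝ := (N : ℝ) with hNr
  have hNr2 : (2 : ℝ) ≤ Nr := by rw [hNr]; exact_mod_cast hN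
  have hNpos : (0 : ℝ) < Nr := by linarith
  have hN1pos : (0 : ℝ) < Nr - 1 := by linarith
  set S : ℝ := ∑ i : Fin N, ∑ j : Fin N, (if i ≠ j then k (z i) (z j) else 0) with hS
  set D : ℝ := ∑ i : Fin N, k (z i) (z i) with hD
  have hT : ∑ i : Fin N, ∑ j : Fin N, k (z i) (z j) = S + D := by
    rw [hS, hD, ← Finset.sum_add_distrib]
    refine Finset.sum_congr rfl fun i _ => ?_
    have : ∀ j, k (z i) (z j)
        = (if i ≠ j then k (z i) (z j) else 0) + (if i = j then k (z i) (z j) else 0) := by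
      intro j; by_cases h : i = j <;> simp [h]
    rw [Finset.sum_congr rfl fun j _ => this j, Finset.sum_add_distrib,
      Finset.sum_ite_eq]
    simp
  have hSabs : |S| ≤ Nr * (Nr - 1) * B := by
    have h1 : |S| ≤ ∑ i : Fin N, ∑ j : Fin N, (if i ≠ j then B else 0) := by
      refine le_trans (Finset.abs_sum_le_sum_abs _ _) ?_
      refine Finset.sum_le_sum fun i _ => ?_
      refine le_trans (Finset.abs_sum_le_sum_abs _ _) ?_
      refine Finset.sum_le_sum fun j _ => ?_
      by_cases h : i = j <;> simp [h, hkB]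
    have h2 : ∑ i : Fin N, ∑ j : Fin N, (if i ≠ j then B else 0) = Nr * (Nr - 1) * B := by
      have : ∀ i j : Fin N, (if i ≠ j then B else 0) = B - (if i = j then B else 0) := by
        intro i j; by_cases h : i = j <;> simp [h]
      rw [Finset.sum_congr rfl fun i _ => Finset.sum_congr rfl fun j _ => this i j]
      simp [Finset.sum_sub_distrib, Finset.sum_ite_eq, Finset.card_univ, mul_comm]
      ring
    linarith
  have hDabs : |D| ≤ Nr * B := by
    refine le_trans (Finset.abs_sum_le_sum_abs _ _) ?_
    calc ∑ i : Fin N, |k (z i) (z i)| ≤ ∑ _i : Fin N, B :=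
          Finset.sum_le_sum fun i _ => hkB _ _
      _ = Nr * B := by simp [mul_comm]; exact Or.inl rfl
  rw [hT]
  have hrw : (1 / (Nr * (Nr - 1))) * S - (1 / Nr^2) * (S + D)
      = (1 / (Nr^2 * (Nr - 1))) * S - (1 / Nr^2) * D := by
    field_simp
    ring
  rw [hrw]
  have hc1 : (0:ℝ) < 1 / (Nr^2 * (Nr - 1)) := by positivity
  have hc2 : (0:ℝ) < 1 / Nr^2 := by positivity
  calc |(1 / (Nr^2 * (Nr - 1))) * S - (1 / Nr^2) * D|
      ≤ |(1 / (Nr^2 * (Nr - 1))) * S| + |(1 / Nr^2) * D| := abs_sub _ _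
    _ = (1 / (Nr^2 * (Nr - 1))) * |S| + (1 / Nr^2) * |D| := by
        rw [abs_mul, abs_mul, abs_of_pos hc1, abs_of_pos hc2]
    _ ≤ (1 / (Nr^2 * (Nr - 1))) * (Nr * (Nr - 1) * B) + (1 / Nr^2) * (Nr * B) := by
        gcongr
    _ = 2 / Nr * B := by field_simp; ring

/-- The doubly U-statistic approximation `MMD_{U,U}²(Pⁿ‖Qᵐ)` differs from the
plug-in `MMD²(Pⁿ‖Qᵐ)` by at most `2(1/m + 1/n)·sup_x k(x,x)` for a bounded
kernel, where `Pⁿ` and `Qᵐ` are the empirical measures of `x₁,…,xₙ` and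
`y₁,…,yₘ`. -/
theorem mmdUU_sub_mmd_bound {X : Type*} (k : X → X → ℝ) (B : ℝ)
    (hkB : ∀ x y : X, |k x y| ≤ B) (hBdiag : ∀ x : X, k x x ≤ B)
    (n m : ℕ) (hn : 2 ≤ n) (hm : 2 ≤ m)
    (x : Fin n → X) (y : Fin m → X)
    (MMD2 MMD2UU : ℝ)
    (hMMD2 : MMD2 =
        (1 / ((n : ℝ)^2)) * ∑ i : Fin n, ∑ j : Fin n, k (x i) (x j)
      - (2 / ((n : ℝ) * (m : ℝ))) * ∑ i : Fin n, ∑ j : Fin m, k (x i) (y j)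
      + (1 / ((m : ℝ)^2)) * ∑ i : Fin m, ∑ j : Fin m, k (y i) (y j))
    (hMMD2UU : MMD2UU =
        (1 / ((n : ℝ) * ((n : ℝ) - 1))) * ∑ i : Fin n, ∑ j : Fin n,
          (if i ≠ j then k (x i) (x j) else 0)
      - (2 / ((n : ℝ) * (m : ℝ))) * ∑ i : Fin n, ∑ j : Fin m, k (x i) (y j)
      + (1 / ((m : ℝ) * ((m : ℝ) - 1))) * ∑ i : Fin m, ∑ j : Fin m,
          (if i ≠ j then k (y i) (y j) else 0)) :
    |MMD2UU - MMD2| ≤ 2 * (1 / (m : ℝ) + 1 / (n : ℝ)) * B := by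
  have hx := mmd_diag_key k B hkB n hn x
  have hy := mmd_diag_key k B hkB m hm y
  have heq : MMD2UU - MMD2 =
      ((1 / ((n : ℝ) * ((n : ℝ) - 1))) * ∑ i : Fin n, ∑ j : Fin n,
          (if i ≠ j then k (x i) (x j) else 0)
        - (1 / ((n : ℝ)^2)) * ∑ i : Fin n, ∑ j : Fin n, k (x i) (x j))
      + ((1 / ((m : ℝ) * ((m : ℝ) - 1))) * ∑ i : Fin m, ∑ j : Fin m,
          (if i ≠ j then k (y i) (y j) else 0)
        - (1 / ((m : ℝ)^2)) * ∑ i : Fin m, ∑ j : Fin m, k (y i) (y j)) := by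
    rw [hMMD2, hMMD2UU]; ring
  rw [heq]
  calc |_ + _| ≤ _ + _ := abs_add_le _ _
    _ ≤ 2 / (n : ℝ) * B + 2 / (m : ℝ) * B := add_le_add hx hy
    _ = 2 * (1 / (m : ℝ) + 1 / (n : ℝ)) * B := by ring
end

section
/- For the d-dimensional isotropic Gaussian location model P_θ = N(θ, σ² I_d) with Gaussian kernel k(x,y) = φ(x; y, l² I_d) (the density of N(y, l² I_d) evaluated at x), the MMD information metric tensor at any θ equals g(θ) = (2π)^{-d/2} (l² + 2σ²)^{-d/2 - 1} I_{d×d}. -/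
open MeasureTheory Finset ProbabilityTheory
open Real Filter
open scoped ENNReal NNReal


/-- The Gaussian (RBF, density-normalised) kernel on `ℝᵈ` with lengthscale `l`:
`k(x,y) = φ(x; y, l² I_d)`. -/
noncomputable def gaussKernel (d : ℕ) (l : ℝ) (x y : Fin d → ℝ) : ℝ :=
  (2 * Real.pi * l ^ 2) ^ (-(d : ℝ) / 2)
    * Real.exp (-(∑ i, (x i - y i) ^ 2) / (2 * l ^ 2))

/-- Mixed second partial derivative `∂_{x_i}∂_{y_j} k(x, y)` of the kernel. -/
noncomputable def gaussKernelMixedDeriv (d : ℕ) (l : ℝ) (x y : Fin d → ℝ)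
    (i j : Fin d) : ℝ :=
  deriv (fun t =>
    deriv (fun s => gaussKernel d l (Function.update x i t) (Function.update y j s))
      (y j)) (x i)

lemma hasDerivAt_sumSq (d : ℕ) (z w : Fin d → ℝ) (i : Fin d) (t₀ : ℝ) :
    HasDerivAt (fun t => ∑ k, (Function.update z i t k - w k) ^ 2) (2 * (t₀ - w i)) t₀ := by
  have h : HasDerivAt (fun t => ∑ k, ((if k = i then t else z k) - w k) ^ 2)
      (∑ k, if k = i then 2 * (t₀ - w i) else 0) t₀ := by
    apply HasDerivAt.fun_sum
    intro k _
    by_cases hk : k = i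
    · subst hk
      simp only [if_pos rfl]
      have := ((hasDerivAt_id t₀).sub_const (w k)).fun_pow 2
      simpa using this
    · simp only [if_neg hk]
      exact hasDerivAt_const _ _
  simp only [Finset.sum_ite_eq', Finset.mem_univ, if_pos] at h
  convert h using 2 with t
  refine Finset.sum_congr rfl fun k _ => ?_
  rw [Function.update_apply]

lemma hasDerivAt_gk_right (d : ℕ) {l : ℝ} (hl : l ≠ 0) (X y : Fin d → ℝ) (j : Fin d) (s₀ : ℝ) :
    HasDerivAt (fun s => gaussKernel d l X (Function.update y j s))
      (((X j - s₀) / l ^ 2) * gaussKernel d l X (Function.update y j s₀)) s₀ := by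
  have key : ∀ s, gaussKernel d l X (Function.update y j s)
      = (2 * Real.pi * l ^ 2) ^ (-(d : ℝ) / 2)
        * Real.exp (-(∑ k, (Function.update y j s k - X k) ^ 2) / (2 * l ^ 2)) := by
    intro s
    unfold gaussKernel
    have : ∑ k, (X k - Function.update y j s k) ^ 2
        = ∑ k, (Function.update y j s k - X k) ^ 2 :=
      Finset.sum_congr rfl fun k _ => by ring
    rw [this]
  simp_rw [key]
  have hS := hasDerivAt_sumSq d y X j s₀
  have h := ((hS.fun_neg.div_const (2 * l ^ 2)).exp).const_mul
    ((2 * Real.pi * l ^ 2) ^ (-(d : ℝ) / 2))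
  refine h.congr_deriv ?_
  field_simp
  ring

lemma hasDerivAt_gk_left (d : ℕ) {l : ℝ} (hl : l ≠ 0) (x y : Fin d → ℝ) (i : Fin d) (t₀ : ℝ) :
    HasDerivAt (fun t => gaussKernel d l (Function.update x i t) y)
      ((-(t₀ - y i) / l ^ 2) * gaussKernel d l (Function.update x i t₀) y) t₀ := by
  have hS := hasDerivAt_sumSq d x y i t₀
  have h := ((hS.fun_neg.div_const (2 * l ^ 2)).exp).const_mul
    ((2 * Real.pi * l ^ 2) ^ (-(d : ℝ) / 2))
  have key : ∀ t, gaussKernel d l (Function.update x i t) y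
      = (2 * Real.pi * l ^ 2) ^ (-(d : ℝ) / 2)
        * Real.exp (-(∑ k, (Function.update x i t k - y k) ^ 2) / (2 * l ^ 2)) := by
    intro t; rfl
  simp_rw [key]
  refine h.congr_deriv ?_
  field_simp

lemma mixedDeriv_eq (d : ℕ) {l : ℝ} (hl : l ≠ 0) (x y : Fin d → ℝ) (i j : Fin d) :
    gaussKernelMixedDeriv d l x y i j
      = ((if i = j then 1 else 0) / l ^ 2 - (x i - y i) * (x j - y j) / l ^ 4)
        * gaussKernel d l x y := by
  unfold gaussKernelMixedDeriv
  have h1 : (fun t => deriv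
      (fun s => gaussKernel d l (Function.update x i t) (Function.update y j s)) (y j))
      = fun t => ((Function.update x i t j - y j) / l ^ 2)
          * gaussKernel d l (Function.update x i t) y := by
    funext t
    have := (hasDerivAt_gk_right d hl (Function.update x i t) y j (y j)).deriv
    rwa [Function.update_eq_self] at this
  rw [h1]
  have hu : HasDerivAt (fun t => ((Function.update x i t j - y j) / l ^ 2))
      ((if j = i then 1 else 0) / l ^ 2) (x i) := by
    simp_rw [Function.update_apply]
    by_cases hji : j = i
    · simp only [if_pos hji]
      exact ((hasDerivAt_id (x i)).sub_const (y j)).div_const _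
    · simp only [if_neg hji]
      simpa using (hasDerivAt_const (x i) ((x j - y j) / l ^ 2))
  have hv := hasDerivAt_gk_left d hl x y i (x i)
  rw [Function.update_eq_self] at hv
  have := (hu.fun_mul hv).deriv
  rw [this]
  rw [Function.update_eq_self]
  by_cases hij : i = j
  · subst hij; simp; ring
  · rw [if_neg hij, if_neg (Ne.symm hij)]
    ring



theorem integral_pi_prod {n : ℕ} (μ : Measure ℝ) [SigmaFinite μ] (f : Fin n → ℝ → ℝ) :
    ∫ x : Fin n → ℝ, ∏ i, f i (x i) ∂(Measure.pi fun _ => μ) = ∏ i, ∫ x, f i x ∂μ := by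
  induction n with
  | zero => simp [integral_const, measureReal_def, Measure.pi_empty_univ]
  | succ n ih =>
    calc
      ∫ x : Fin (n+1) → ℝ, ∏ i, f i (x i) ∂(Measure.pi fun _ => μ)
          = ∫ x : ℝ × (Fin n → ℝ), f 0 x.1 * ∏ i : Fin n, f (Fin.succ i) (x.2 i)
            ∂(μ.prod (Measure.pi fun _ => μ)) := by
        rw [← ((measurePreserving_piFinSuccAbove (fun _ : Fin (n+1) => μ) 0).symm).integral_comp']
        simp_rw [MeasurableEquiv.piFinSuccAbove_symm_apply, Fin.insertNthEquiv,
          Fin.prod_univ_succ, Fin.insertNth_zero, Equiv.coe_fn_mk]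
        simp only [Fin.cons_zero, Fin.cons_succ, cast_eq]
      _ = (∫ x, f 0 x ∂μ) * ∏ i : Fin n, ∫ x, f (Fin.succ i) x ∂μ := by
        rw [← ih (fun i => f (Fin.succ i)), ← integral_prod_mul]
      _ = ∏ i, ∫ x, f i x ∂μ := by rw [Fin.prod_univ_succ]

lemma integral_x_mul_gauss (p : ℝ) : ∫ x : ℝ, x * exp (-p * x ^ 2) = 0 := by
  have h := integral_neg_eq_self (fun x : ℝ => x * Real.exp (-p * x ^ 2)) (volume : Measure ℝ)
  simp only [neg_sq, neg_mul] at h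
  rw [integral_neg] at h
  simp only [neg_mul]
  linarith

lemma integrable_sq_mul_gauss {p : ℝ} (hp : 0 < p) :
    Integrable fun x : ℝ => x ^ 2 * exp (-p * x ^ 2) := by
  have h := integrable_rpow_mul_exp_neg_mul_sq hp (s := 2) (by norm_num)
  have : ∀ x : ℝ, x ^ (2 : ℝ) = x ^ (2 : ℕ) := fun x => by
    rw [← Real.rpow_natCast x 2]; norm_num
  simpa [this] using h

lemma tendsto_aux {p : ℝ} (hp : 0 < p) :
    Tendsto (fun x : ℝ => -(x / (2 * p)) * exp (-p * x ^ 2)) atTop (nhds 0) := by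
  have h := tendsto_rpow_abs_mul_exp_neg_mul_sq_cocompact hp 1
  have h2 : Tendsto (fun x : ℝ => |x| ^ (1 : ℝ) * exp (-p * x ^ 2)) atTop (nhds 0) := by
    refine h.mono_left ?_
    rw [cocompact_eq_atBot_atTop]
    exact le_sup_right
  have h3 : Tendsto (fun x : ℝ => x * exp (-p * x ^ 2)) atTop (nhds 0) := by
    refine h2.congr' ?_
    filter_upwards [eventually_ge_atTop (0 : ℝ)] with x hx
    rw [Real.rpow_one, abs_of_nonneg hx]
  have h4 := h3.const_mul (-(1 / (2 * p)))
  rw [mul_zero] at h4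
  refine h4.congr fun x => by ring

lemma integral_sq_mul_gauss {p : ℝ} (hp : 0 < p) :
    ∫ x : ℝ, x ^ 2 * exp (-p * x ^ 2) = √(π / p) / (2 * p) := by
  have heq : (fun x : ℝ => x ^ 2 * exp (-p * x ^ 2))
      = fun x : ℝ => (fun t : ℝ => t ^ 2 * exp (-p * t ^ 2)) |x| := by
    funext x; simp [sq_abs]
  rw [heq, integral_comp_abs (f := fun t : ℝ => t ^ 2 * exp (-p * t ^ 2))]
  have hIoi : ∫ x in Set.Ioi (0:ℝ), (x ^ 2 * exp (-p * x ^ 2) - 1 / (2 * p) * exp (-p * x ^ 2)) = 0 := by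
    have hderiv : ∀ x ∈ Set.Ioi (0:ℝ),
        HasDerivAt (fun t : ℝ => -(t / (2 * p)) * exp (-p * t ^ 2))
          (x ^ 2 * exp (-p * x ^ 2) - 1 / (2 * p) * exp (-p * x ^ 2)) x := by
      intro x _
      have h1 : HasDerivAt (fun t : ℝ => -(t / (2 * p))) (-(1 / (2 * p))) x :=
        ((hasDerivAt_id x).div_const (2 * p)).neg
      have h2 : HasDerivAt (fun t : ℝ => exp (-p * t ^ 2)) (exp (-p * x ^ 2) * (-p * (2 * x))) x := by
        have := (((hasDerivAt_id x).pow 2).const_mul (-p)).exp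
        simpa using this
      have := h1.fun_mul h2
      refine this.congr_deriv ?_
      field_simp
      ring
    have hint : IntegrableOn
        (fun x : ℝ => x ^ 2 * exp (-p * x ^ 2) - 1 / (2 * p) * exp (-p * x ^ 2)) (Set.Ioi 0) :=
      ((integrable_sq_mul_gauss hp).sub ((integrable_exp_neg_mul_sq hp).const_mul _)).integrableOn
    have hcont : ContinuousWithinAt (fun t : ℝ => -(t / (2 * p)) * exp (-p * t ^ 2)) (Set.Ici 0) 0 := by
      exact (Continuous.continuousWithinAt (by continuity))
    have := MeasureTheory.integral_Ioi_of_hasDerivAt_of_tendsto hcont hderiv hint (tendsto_aux hp)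
    simpa using this
  have hsplit : ∫ x in Set.Ioi (0:ℝ), x ^ 2 * exp (-p * x ^ 2)
      = (∫ x in Set.Ioi (0:ℝ), (x ^ 2 * exp (-p * x ^ 2) - 1 / (2 * p) * exp (-p * x ^ 2)))
        + 1 / (2 * p) * ∫ x in Set.Ioi (0:ℝ), exp (-p * x ^ 2) := by
    have J1 : IntegrableOn (fun x : ℝ =>
        x ^ 2 * exp (-p * x ^ 2) - 1 / (2 * p) * exp (-p * x ^ 2)) (Set.Ioi 0) :=
      ((integrable_sq_mul_gauss hp).sub ((integrable_exp_neg_mul_sq hp).const_mul _)).integrableOn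
    have J2 : IntegrableOn (fun x : ℝ => 1 / (2 * p) * exp (-p * x ^ 2)) (Set.Ioi 0) :=
      ((integrable_exp_neg_mul_sq hp).const_mul _).integrableOn
    rw [← integral_const_mul, ← integral_add J1 J2]
    congr 1; funext x; ring
  rw [hsplit, hIoi, integral_gaussian_Ioi]
  field_simp
  ring

lemma integrable_shift_gauss {p : ℝ} (hp : 0 < p) (c : ℝ) :
    Integrable fun x : ℝ => exp (-p * (x - c) ^ 2) :=
  (integrable_exp_neg_mul_sq hp).comp_sub_right c

lemma integrable_shift_gauss1 {p : ℝ} (hp : 0 < p) (c e : ℝ) :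
    Integrable fun x : ℝ => (x - e) * exp (-p * (x - c) ^ 2) := by
  have hg : Integrable fun y : ℝ => (y + (c - e)) * exp (-p * y ^ 2) := by
    have := (integrable_mul_exp_neg_mul_sq hp).add
      ((integrable_exp_neg_mul_sq hp).const_mul (c - e))
    refine this.congr ?_
    filter_upwards with y
    simp only [Pi.add_apply]; ring
  have := hg.comp_sub_right c
  refine this.congr ?_
  filter_upwards with x
  have : x - c + (c - e) = x - e := by ring
  simp only [this]

lemma integrable_shift_gauss2 {p : ℝ} (hp : 0 < p) (c e : ℝ) :
    Integrable fun x : ℝ => (x - e) ^ 2 * exp (-p * (x - c) ^ 2) := by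
  have hg : Integrable fun y : ℝ => (y + (c - e)) ^ 2 * exp (-p * y ^ 2) := by
    have := ((integrable_sq_mul_gauss hp).add
      ((integrable_mul_exp_neg_mul_sq hp).const_mul (2 * (c - e)))).add
      ((integrable_exp_neg_mul_sq hp).const_mul ((c - e) ^ 2))
    refine this.congr ?_
    filter_upwards with y
    simp only [Pi.add_apply]; ring
  have := hg.comp_sub_right c
  refine this.congr ?_
  filter_upwards with x
  have : x - c + (c - e) = x - e := by ring
  simp only [this]

lemma val_W0 {p : ℝ} (hp : 0 < p) (c : ℝ) :
    ∫ x : ℝ, exp (-p * (x - c) ^ 2) = √(π / p) := by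
  rw [show (fun x : ℝ => exp (-p * (x - c) ^ 2))
      = fun x : ℝ => (fun y : ℝ => exp (-p * y ^ 2)) (x - c) from rfl,
    integral_sub_right_eq_self (μ := (volume : Measure ℝ)) (fun y : ℝ => exp (-p * y ^ 2)) c, integral_gaussian]

lemma val_W1 {p : ℝ} (hp : 0 < p) (c e : ℝ) :
    ∫ x : ℝ, (x - e) * exp (-p * (x - c) ^ 2) = (c - e) * √(π / p) := by
  have h := integral_add_right_eq_self (μ := (volume : Measure ℝ)) (fun x : ℝ => (x - e) * exp (-p * (x - c) ^ 2)) c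
  rw [← h]
  have hpt : ∀ x : ℝ, (x + c - e) * exp (-p * (x + c - c) ^ 2)
      = x * exp (-p * x ^ 2) + (c - e) * exp (-p * x ^ 2) := by
    intro x
    have h2 : x + c - c = x := by ring
    rw [h2]; ring
  simp_rw [hpt]
  rw [integral_add (integrable_mul_exp_neg_mul_sq hp)
    ((integrable_exp_neg_mul_sq hp).const_mul _), integral_x_mul_gauss,
    integral_const_mul, integral_gaussian]
  ring

lemma val_W2 {p : ℝ} (hp : 0 < p) (c e : ℝ) :
    ∫ x : ℝ, (x - e) ^ 2 * exp (-p * (x - c) ^ 2)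
      = (1 / (2 * p) + (c - e) ^ 2) * √(π / p) := by
  have h := integral_add_right_eq_self (μ := (volume : Measure ℝ)) (fun x : ℝ => (x - e) ^ 2 * exp (-p * (x - c) ^ 2)) c
  rw [← h]
  have hpt : ∀ x : ℝ, (x + c - e) ^ 2 * exp (-p * (x + c - c) ^ 2)
      = x ^ 2 * exp (-p * x ^ 2) + (2 * (c - e) * (x * exp (-p * x ^ 2))
        + (c - e) ^ 2 * exp (-p * x ^ 2)) := by
    intro x
    have h2 : x + c - c = x := by ring
    rw [h2]; ring
  simp_rw [hpt]
  have I1 := integrable_sq_mul_gauss hp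
  have I2 : Integrable fun x : ℝ => 2 * (c - e) * (x * exp (-p * x ^ 2)) :=
    (integrable_mul_exp_neg_mul_sq hp).const_mul _
  have I3 : Integrable fun x : ℝ => (c - e) ^ 2 * exp (-p * x ^ 2) :=
    (integrable_exp_neg_mul_sq hp).const_mul _
  have I23 : Integrable fun x : ℝ =>
      2 * (c - e) * (x * exp (-p * x ^ 2)) + (c - e) ^ 2 * exp (-p * x ^ 2) := I2.add I3
  rw [integral_add I1 I23, integral_add I2 I3,
    integral_const_mul, integral_const_mul, integral_x_mul_gauss,
    integral_sq_mul_gauss hp, integral_gaussian]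
  field_simp
  ring

noncomputable def Gm (σ : ℝ) : Measure ℝ := gaussianReal 0 (Real.toNNReal (σ ^ 2))

instance (σ : ℝ) : IsProbabilityMeasure (Gm σ) := by unfold Gm; infer_instance

lemma hVne {σ : ℝ} (hσ : 0 < σ) : (Real.toNNReal (σ ^ 2)) ≠ 0 := by
  simp only [ne_eq, Real.toNNReal_eq_zero, not_le]
  positivity

lemma pdf_eq {σ : ℝ} (hσ : 0 < σ) (x : ℝ) :
    gaussianPDFReal 0 (Real.toNNReal (σ ^ 2)) x
      = (√(2 * π * σ ^ 2))⁻¹ * exp (-x ^ 2 / (2 * σ ^ 2)) := by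
  rw [gaussianPDFReal]
  rw [Real.coe_toNNReal _ (sq_nonneg σ), sub_zero]

lemma integral_Gm {σ : ℝ} (hσ : 0 < σ) (f : ℝ → ℝ) :
    ∫ x, f x ∂(Gm σ) = ∫ x, gaussianPDFReal 0 (Real.toNNReal (σ ^ 2)) x * f x := by
  unfold Gm
  rw [gaussianReal_of_var_ne_zero _ (hVne hσ)]
  have hd : gaussianPDF 0 (Real.toNNReal (σ ^ 2))
      = fun x => ((fun x => Real.toNNReal (gaussianPDFReal 0 (Real.toNNReal (σ ^ 2)) x)) x : ℝ≥0∞) := rfl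
  rw [hd, integral_withDensity_eq_integral_smul
    ((measurable_gaussianPDFReal _ _).real_toNNReal) f]
  congr 1
  funext x
  rw [NNReal.smul_def, Real.coe_toNNReal _ (gaussianPDFReal_nonneg _ _ _), smul_eq_mul]

section OneD
variable {σ l : ℝ}

lemma pdf_mul_exp (hσ : 0 < σ) (hl : 0 < l) (a b : ℝ) :
    gaussianPDFReal 0 (Real.toNNReal (σ ^ 2)) a * exp (-(a - b) ^ 2 / (2 * l ^ 2))
      = (√(2 * π * σ ^ 2))⁻¹ * (exp (-b ^ 2 / (2 * (l ^ 2 + σ ^ 2)))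
          * exp (-((l ^ 2 + σ ^ 2) / (2 * σ ^ 2 * l ^ 2))
              * (a - σ ^ 2 / (l ^ 2 + σ ^ 2) * b) ^ 2)) := by
  rw [pdf_eq hσ, mul_assoc]
  congr 1
  rw [← Real.exp_add, ← Real.exp_add]
  congr 1
  have h1 : σ ≠ 0 := hσ.ne'
  have h2 : l ≠ 0 := hl.ne'
  have h3 : l ^ 2 + σ ^ 2 ≠ 0 := by positivity
  field_simp
  ring

lemma pdf_mul_exp2 (hσ : 0 < σ) (hl : 0 < l) (b : ℝ) :
    gaussianPDFReal 0 (Real.toNNReal (σ ^ 2)) b * exp (-b ^ 2 / (2 * (l ^ 2 + σ ^ 2)))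
      = (√(2 * π * σ ^ 2))⁻¹
          * exp (-((l ^ 2 + 2 * σ ^ 2) / (2 * σ ^ 2 * (l ^ 2 + σ ^ 2))) * b ^ 2) := by
  rw [pdf_eq hσ, mul_assoc]
  congr 1
  rw [← Real.exp_add]
  congr 1
  have h1 : σ ≠ 0 := hσ.ne'
  have h3 : l ^ 2 + σ ^ 2 ≠ 0 := by positivity
  field_simp
  ring

lemma sq_rpow_neg_half {x : ℝ} (hx : 0 ≤ x) : (x ^ (-(1:ℝ)/2)) ^ 2 = x⁻¹ := by
  rw [← Real.rpow_natCast (x ^ (-(1:ℝ)/2)) 2, ← Real.rpow_mul hx,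
    show (-(1:ℝ)/2 * (2:ℕ)) = -1 by norm_num, Real.rpow_neg_one]

lemma numeric_base (hσ : 0 < σ) (hl : 0 < l) :
    (2 * π * l ^ 2) ^ (-(1:ℝ)/2)
        * ((√(2 * π * σ ^ 2))⁻¹ * √(π / ((l ^ 2 + σ ^ 2) / (2 * σ ^ 2 * l ^ 2))))
        * (√(2 * π * σ ^ 2))⁻¹
        * √(π / ((l ^ 2 + 2 * σ ^ 2) / (2 * σ ^ 2 * (l ^ 2 + σ ^ 2))))
      = (2 * π) ^ (-(1:ℝ)/2) * (l ^ 2 + 2 * σ ^ 2) ^ (-(1:ℝ)/2) := by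
  have hπ := Real.pi_pos
  have h1 : (0:ℝ) < 2 * π * l ^ 2 := by positivity
  have h2 : (0:ℝ) < 2 * π * σ ^ 2 := by positivity
  have h3 : (0:ℝ) < π / ((l ^ 2 + σ ^ 2) / (2 * σ ^ 2 * l ^ 2)) := by positivity
  have h4 : (0:ℝ) < π / ((l ^ 2 + 2 * σ ^ 2) / (2 * σ ^ 2 * (l ^ 2 + σ ^ 2))) := by positivity
  have h5 : (0:ℝ) < 2 * π := by positivity
  have h6 : (0:ℝ) < l ^ 2 + 2 * σ ^ 2 := by positivity
  have h7 : (0:ℝ) < l ^ 2 + σ ^ 2 := by positivity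
  have ha : (0:ℝ) ≤ (2 * π * l ^ 2) ^ (-(1:ℝ)/2)
      * ((√(2 * π * σ ^ 2))⁻¹ * √(π / ((l ^ 2 + σ ^ 2) / (2 * σ ^ 2 * l ^ 2))))
      * (√(2 * π * σ ^ 2))⁻¹
      * √(π / ((l ^ 2 + 2 * σ ^ 2) / (2 * σ ^ 2 * (l ^ 2 + σ ^ 2)))) := by positivity
  have hb : (0:ℝ) ≤ (2 * π) ^ (-(1:ℝ)/2) * (l ^ 2 + 2 * σ ^ 2) ^ (-(1:ℝ)/2) := by positivity
  have hsq : ((2 * π * l ^ 2) ^ (-(1:ℝ)/2)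
        * ((√(2 * π * σ ^ 2))⁻¹ * √(π / ((l ^ 2 + σ ^ 2) / (2 * σ ^ 2 * l ^ 2))))
        * (√(2 * π * σ ^ 2))⁻¹
        * √(π / ((l ^ 2 + 2 * σ ^ 2) / (2 * σ ^ 2 * (l ^ 2 + σ ^ 2))))) ^ 2
      = ((2 * π) ^ (-(1:ℝ)/2) * (l ^ 2 + 2 * σ ^ 2) ^ (-(1:ℝ)/2)) ^ 2 := by
    simp only [mul_pow, inv_pow]
    rw [sq_rpow_neg_half h1.le, sq_rpow_neg_half h5.le, sq_rpow_neg_half h6.le,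
      Real.sq_sqrt h2.le, Real.sq_sqrt h3.le, Real.sq_sqrt h4.le]
    field_simp
  calc (2 * π * l ^ 2) ^ (-(1:ℝ)/2)
        * ((√(2 * π * σ ^ 2))⁻¹ * √(π / ((l ^ 2 + σ ^ 2) / (2 * σ ^ 2 * l ^ 2))))
        * (√(2 * π * σ ^ 2))⁻¹
        * √(π / ((l ^ 2 + 2 * σ ^ 2) / (2 * σ ^ 2 * (l ^ 2 + σ ^ 2))))
      = √(((2 * π * l ^ 2) ^ (-(1:ℝ)/2)
        * ((√(2 * π * σ ^ 2))⁻¹ * √(π / ((l ^ 2 + σ ^ 2) / (2 * σ ^ 2 * l ^ 2))))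
        * (√(2 * π * σ ^ 2))⁻¹
        * √(π / ((l ^ 2 + 2 * σ ^ 2) / (2 * σ ^ 2 * (l ^ 2 + σ ^ 2))))) ^ 2) :=
        (Real.sqrt_sq ha).symm
    _ = √(((2 * π) ^ (-(1:ℝ)/2) * (l ^ 2 + 2 * σ ^ 2) ^ (-(1:ℝ)/2)) ^ 2) := by rw [hsq]
    _ = (2 * π) ^ (-(1:ℝ)/2) * (l ^ 2 + 2 * σ ^ 2) ^ (-(1:ℝ)/2) := Real.sqrt_sq hb

lemma Jbase (hσ : 0 < σ) (hl : 0 < l) :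
    ∫ b, (∫ a, (2 * π * l ^ 2) ^ (-(1:ℝ)/2) * exp (-(a - b) ^ 2 / (2 * l ^ 2)) ∂(Gm σ)) ∂(Gm σ)
      = (2 * π) ^ (-(1:ℝ)/2) * (l ^ 2 + 2 * σ ^ 2) ^ (-(1:ℝ)/2) := by
  have hP : (0:ℝ) < (l ^ 2 + σ ^ 2) / (2 * σ ^ 2 * l ^ 2) := by positivity
  have hS : (0:ℝ) < (l ^ 2 + 2 * σ ^ 2) / (2 * σ ^ 2 * (l ^ 2 + σ ^ 2)) := by positivity
  have hinner : ∀ b : ℝ,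
      (∫ a, (2 * π * l ^ 2) ^ (-(1:ℝ)/2) * exp (-(a - b) ^ 2 / (2 * l ^ 2)) ∂(Gm σ))
        = ((2 * π * l ^ 2) ^ (-(1:ℝ)/2) * ((√(2 * π * σ ^ 2))⁻¹
            * √(π / ((l ^ 2 + σ ^ 2) / (2 * σ ^ 2 * l ^ 2)))))
          * exp (-b ^ 2 / (2 * (l ^ 2 + σ ^ 2))) := by
    intro b
    rw [integral_Gm hσ]
    have hpt : ∀ a : ℝ, gaussianPDFReal 0 (Real.toNNReal (σ ^ 2)) a
          * ((2 * π * l ^ 2) ^ (-(1:ℝ)/2) * exp (-(a - b) ^ 2 / (2 * l ^ 2)))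
        = ((2 * π * l ^ 2) ^ (-(1:ℝ)/2) * ((√(2 * π * σ ^ 2))⁻¹
            * exp (-b ^ 2 / (2 * (l ^ 2 + σ ^ 2)))))
          * exp (-((l ^ 2 + σ ^ 2) / (2 * σ ^ 2 * l ^ 2))
              * (a - σ ^ 2 / (l ^ 2 + σ ^ 2) * b) ^ 2) := by
      intro a
      rw [show gaussianPDFReal 0 (Real.toNNReal (σ ^ 2)) a
          * ((2 * π * l ^ 2) ^ (-(1:ℝ)/2) * exp (-(a - b) ^ 2 / (2 * l ^ 2)))
          = (2 * π * l ^ 2) ^ (-(1:ℝ)/2) * (gaussianPDFReal 0 (Real.toNNReal (σ ^ 2)) a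
            * exp (-(a - b) ^ 2 / (2 * l ^ 2))) from by ring,
        pdf_mul_exp hσ hl a b]
      ring
    simp_rw [hpt]
    rw [integral_const_mul, val_W0 hP (σ ^ 2 / (l ^ 2 + σ ^ 2) * b)]
    ring
  simp_rw [hinner]
  rw [integral_Gm hσ]
  have hpt2 : ∀ b : ℝ, gaussianPDFReal 0 (Real.toNNReal (σ ^ 2)) b
        * (((2 * π * l ^ 2) ^ (-(1:ℝ)/2) * ((√(2 * π * σ ^ 2))⁻¹
            * √(π / ((l ^ 2 + σ ^ 2) / (2 * σ ^ 2 * l ^ 2)))))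
          * exp (-b ^ 2 / (2 * (l ^ 2 + σ ^ 2))))
      = ((2 * π * l ^ 2) ^ (-(1:ℝ)/2) * ((√(2 * π * σ ^ 2))⁻¹
            * √(π / ((l ^ 2 + σ ^ 2) / (2 * σ ^ 2 * l ^ 2)))) * (√(2 * π * σ ^ 2))⁻¹)
          * exp (-((l ^ 2 + 2 * σ ^ 2) / (2 * σ ^ 2 * (l ^ 2 + σ ^ 2))) * b ^ 2) := by
    intro b
    rw [show gaussianPDFReal 0 (Real.toNNReal (σ ^ 2)) b
        * (((2 * π * l ^ 2) ^ (-(1:ℝ)/2) * ((√(2 * π * σ ^ 2))⁻¹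
            * √(π / ((l ^ 2 + σ ^ 2) / (2 * σ ^ 2 * l ^ 2)))))
          * exp (-b ^ 2 / (2 * (l ^ 2 + σ ^ 2))))
        = ((2 * π * l ^ 2) ^ (-(1:ℝ)/2) * ((√(2 * π * σ ^ 2))⁻¹
            * √(π / ((l ^ 2 + σ ^ 2) / (2 * σ ^ 2 * l ^ 2)))))
          * (gaussianPDFReal 0 (Real.toNNReal (σ ^ 2)) b
            * exp (-b ^ 2 / (2 * (l ^ 2 + σ ^ 2)))) from by ring,
      pdf_mul_exp2 hσ hl b]
    ring
  simp_rw [hpt2]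
  rw [integral_const_mul, integral_gaussian]
  exact numeric_base hσ hl

lemma Jzero (hσ : 0 < σ) (hl : 0 < l) :
    ∫ b, (∫ a, ((a - b) / l ^ 2)
        * ((2 * π * l ^ 2) ^ (-(1:ℝ)/2) * exp (-(a - b) ^ 2 / (2 * l ^ 2))) ∂(Gm σ)) ∂(Gm σ)
      = 0 := by
  have hP : (0:ℝ) < (l ^ 2 + σ ^ 2) / (2 * σ ^ 2 * l ^ 2) := by positivity
  have hS : (0:ℝ) < (l ^ 2 + 2 * σ ^ 2) / (2 * σ ^ 2 * (l ^ 2 + σ ^ 2)) := by positivity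
  have hinner : ∀ b : ℝ,
      (∫ a, ((a - b) / l ^ 2)
          * ((2 * π * l ^ 2) ^ (-(1:ℝ)/2) * exp (-(a - b) ^ 2 / (2 * l ^ 2))) ∂(Gm σ))
        = ((2 * π * l ^ 2) ^ (-(1:ℝ)/2) / l ^ 2 * (√(2 * π * σ ^ 2))⁻¹
            * ((σ ^ 2 / (l ^ 2 + σ ^ 2) - 1) * √(π / ((l ^ 2 + σ ^ 2) / (2 * σ ^ 2 * l ^ 2)))))
          * (b * exp (-b ^ 2 / (2 * (l ^ 2 + σ ^ 2)))) := by
    intro b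
    rw [integral_Gm hσ]
    have hpt : ∀ a : ℝ, gaussianPDFReal 0 (Real.toNNReal (σ ^ 2)) a
          * (((a - b) / l ^ 2)
            * ((2 * π * l ^ 2) ^ (-(1:ℝ)/2) * exp (-(a - b) ^ 2 / (2 * l ^ 2))))
        = ((2 * π * l ^ 2) ^ (-(1:ℝ)/2) / l ^ 2 * ((√(2 * π * σ ^ 2))⁻¹
            * exp (-b ^ 2 / (2 * (l ^ 2 + σ ^ 2)))))
          * ((a - b) * exp (-((l ^ 2 + σ ^ 2) / (2 * σ ^ 2 * l ^ 2))
              * (a - σ ^ 2 / (l ^ 2 + σ ^ 2) * b) ^ 2)) := by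
      intro a
      rw [show gaussianPDFReal 0 (Real.toNNReal (σ ^ 2)) a
          * (((a - b) / l ^ 2)
            * ((2 * π * l ^ 2) ^ (-(1:ℝ)/2) * exp (-(a - b) ^ 2 / (2 * l ^ 2))))
          = ((2 * π * l ^ 2) ^ (-(1:ℝ)/2) * ((a - b) / l ^ 2))
            * (gaussianPDFReal 0 (Real.toNNReal (σ ^ 2)) a
              * exp (-(a - b) ^ 2 / (2 * l ^ 2))) from by ring,
        pdf_mul_exp hσ hl a b]
      ring
    simp_rw [hpt]
    rw [integral_const_mul, val_W1 hP (σ ^ 2 / (l ^ 2 + σ ^ 2) * b) b]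
    ring
  simp_rw [hinner]
  rw [integral_Gm hσ]
  have hpt2 : ∀ b : ℝ, gaussianPDFReal 0 (Real.toNNReal (σ ^ 2)) b
        * (((2 * π * l ^ 2) ^ (-(1:ℝ)/2) / l ^ 2 * (√(2 * π * σ ^ 2))⁻¹
            * ((σ ^ 2 / (l ^ 2 + σ ^ 2) - 1) * √(π / ((l ^ 2 + σ ^ 2) / (2 * σ ^ 2 * l ^ 2)))))
          * (b * exp (-b ^ 2 / (2 * (l ^ 2 + σ ^ 2)))))
      = ((2 * π * l ^ 2) ^ (-(1:ℝ)/2) / l ^ 2 * (√(2 * π * σ ^ 2))⁻¹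
            * ((σ ^ 2 / (l ^ 2 + σ ^ 2) - 1) * √(π / ((l ^ 2 + σ ^ 2) / (2 * σ ^ 2 * l ^ 2))))
            * (√(2 * π * σ ^ 2))⁻¹)
          * (b * exp (-((l ^ 2 + 2 * σ ^ 2) / (2 * σ ^ 2 * (l ^ 2 + σ ^ 2))) * b ^ 2)) := by
    intro b
    rw [show gaussianPDFReal 0 (Real.toNNReal (σ ^ 2)) b
        * (((2 * π * l ^ 2) ^ (-(1:ℝ)/2) / l ^ 2 * (√(2 * π * σ ^ 2))⁻¹
            * ((σ ^ 2 / (l ^ 2 + σ ^ 2) - 1) * √(π / ((l ^ 2 + σ ^ 2) / (2 * σ ^ 2 * l ^ 2)))))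
          * (b * exp (-b ^ 2 / (2 * (l ^ 2 + σ ^ 2)))))
        = ((2 * π * l ^ 2) ^ (-(1:ℝ)/2) / l ^ 2 * (√(2 * π * σ ^ 2))⁻¹
            * ((σ ^ 2 / (l ^ 2 + σ ^ 2) - 1) * √(π / ((l ^ 2 + σ ^ 2) / (2 * σ ^ 2 * l ^ 2)))) * b)
          * (gaussianPDFReal 0 (Real.toNNReal (σ ^ 2)) b
            * exp (-b ^ 2 / (2 * (l ^ 2 + σ ^ 2)))) from by ring,
      pdf_mul_exp2 hσ hl b]
    ring
  simp_rw [hpt2]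
  rw [integral_const_mul, integral_x_mul_gauss, mul_zero]

lemma Jii (hσ : 0 < σ) (hl : 0 < l) :
    ∫ b, (∫ a, (1 / l ^ 2 - (a - b) ^ 2 / l ^ 4)
        * ((2 * π * l ^ 2) ^ (-(1:ℝ)/2) * exp (-(a - b) ^ 2 / (2 * l ^ 2))) ∂(Gm σ)) ∂(Gm σ)
      = (2 * π) ^ (-(1:ℝ)/2) * (l ^ 2 + 2 * σ ^ 2) ^ (-(1:ℝ)/2) * (l ^ 2 + 2 * σ ^ 2)⁻¹ := by
  have hP : (0:ℝ) < (l ^ 2 + σ ^ 2) / (2 * σ ^ 2 * l ^ 2) := by positivity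
  have hS : (0:ℝ) < (l ^ 2 + 2 * σ ^ 2) / (2 * σ ^ 2 * (l ^ 2 + σ ^ 2)) := by positivity
  have hinner : ∀ b : ℝ,
      (∫ a, (1 / l ^ 2 - (a - b) ^ 2 / l ^ 4)
          * ((2 * π * l ^ 2) ^ (-(1:ℝ)/2) * exp (-(a - b) ^ 2 / (2 * l ^ 2))) ∂(Gm σ))
        = ((2 * π * l ^ 2) ^ (-(1:ℝ)/2) * (√(2 * π * σ ^ 2))⁻¹)
          * (exp (-b ^ 2 / (2 * (l ^ 2 + σ ^ 2)))
            * (1 / l ^ 2 * √(π / ((l ^ 2 + σ ^ 2) / (2 * σ ^ 2 * l ^ 2)))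
              - 1 / l ^ 4 * ((1 / (2 * ((l ^ 2 + σ ^ 2) / (2 * σ ^ 2 * l ^ 2)))
                  + (σ ^ 2 / (l ^ 2 + σ ^ 2) * b - b) ^ 2)
                * √(π / ((l ^ 2 + σ ^ 2) / (2 * σ ^ 2 * l ^ 2)))))) := by
    intro b
    rw [integral_Gm hσ]
    have hpt : ∀ a : ℝ, gaussianPDFReal 0 (Real.toNNReal (σ ^ 2)) a
          * ((1 / l ^ 2 - (a - b) ^ 2 / l ^ 4)
            * ((2 * π * l ^ 2) ^ (-(1:ℝ)/2) * exp (-(a - b) ^ 2 / (2 * l ^ 2))))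
        = ((2 * π * l ^ 2) ^ (-(1:ℝ)/2) * ((√(2 * π * σ ^ 2))⁻¹
            * exp (-b ^ 2 / (2 * (l ^ 2 + σ ^ 2)))))
          * (1 / l ^ 2 * exp (-((l ^ 2 + σ ^ 2) / (2 * σ ^ 2 * l ^ 2))
                * (a - σ ^ 2 / (l ^ 2 + σ ^ 2) * b) ^ 2)
            - 1 / l ^ 4 * ((a - b) ^ 2 * exp (-((l ^ 2 + σ ^ 2) / (2 * σ ^ 2 * l ^ 2))
                * (a - σ ^ 2 / (l ^ 2 + σ ^ 2) * b) ^ 2))) := by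
      intro a
      rw [show gaussianPDFReal 0 (Real.toNNReal (σ ^ 2)) a
          * ((1 / l ^ 2 - (a - b) ^ 2 / l ^ 4)
            * ((2 * π * l ^ 2) ^ (-(1:ℝ)/2) * exp (-(a - b) ^ 2 / (2 * l ^ 2))))
          = ((2 * π * l ^ 2) ^ (-(1:ℝ)/2) * (1 / l ^ 2 - (a - b) ^ 2 / l ^ 4))
            * (gaussianPDFReal 0 (Real.toNNReal (σ ^ 2)) a
              * exp (-(a - b) ^ 2 / (2 * l ^ 2))) from by ring,
        pdf_mul_exp hσ hl a b]
      ring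
    simp_rw [hpt]
    rw [integral_const_mul]
    rw [integral_sub ((integrable_shift_gauss hP (σ ^ 2 / (l ^ 2 + σ ^ 2) * b)).const_mul _)
      ((integrable_shift_gauss2 hP (σ ^ 2 / (l ^ 2 + σ ^ 2) * b) b).const_mul _)]
    rw [integral_const_mul, integral_const_mul,
      val_W0 hP (σ ^ 2 / (l ^ 2 + σ ^ 2) * b), val_W2 hP (σ ^ 2 / (l ^ 2 + σ ^ 2) * b) b]
    ring
  simp_rw [hinner]
  rw [integral_Gm hσ]
  have hpt2 : ∀ b : ℝ, gaussianPDFReal 0 (Real.toNNReal (σ ^ 2)) b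
        * (((2 * π * l ^ 2) ^ (-(1:ℝ)/2) * (√(2 * π * σ ^ 2))⁻¹)
          * (exp (-b ^ 2 / (2 * (l ^ 2 + σ ^ 2)))
            * (1 / l ^ 2 * √(π / ((l ^ 2 + σ ^ 2) / (2 * σ ^ 2 * l ^ 2)))
              - 1 / l ^ 4 * ((1 / (2 * ((l ^ 2 + σ ^ 2) / (2 * σ ^ 2 * l ^ 2)))
                  + (σ ^ 2 / (l ^ 2 + σ ^ 2) * b - b) ^ 2)
                * √(π / ((l ^ 2 + σ ^ 2) / (2 * σ ^ 2 * l ^ 2)))))))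
      = ((2 * π * l ^ 2) ^ (-(1:ℝ)/2) * (√(2 * π * σ ^ 2))⁻¹ * (√(2 * π * σ ^ 2))⁻¹
            * √(π / ((l ^ 2 + σ ^ 2) / (2 * σ ^ 2 * l ^ 2)))
            * (1 / l ^ 2 - 1 / l ^ 4 * (1 / (2 * ((l ^ 2 + σ ^ 2) / (2 * σ ^ 2 * l ^ 2))))))
          * exp (-((l ^ 2 + 2 * σ ^ 2) / (2 * σ ^ 2 * (l ^ 2 + σ ^ 2))) * b ^ 2)
        - ((2 * π * l ^ 2) ^ (-(1:ℝ)/2) * (√(2 * π * σ ^ 2))⁻¹ * (√(2 * π * σ ^ 2))⁻¹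
            * √(π / ((l ^ 2 + σ ^ 2) / (2 * σ ^ 2 * l ^ 2)))
            * (1 / l ^ 4 * (σ ^ 2 / (l ^ 2 + σ ^ 2) - 1) ^ 2))
          * (b ^ 2 * exp (-((l ^ 2 + 2 * σ ^ 2) / (2 * σ ^ 2 * (l ^ 2 + σ ^ 2))) * b ^ 2)) := by
    intro b
    have hfac : gaussianPDFReal 0 (Real.toNNReal (σ ^ 2)) b
        * (((2 * π * l ^ 2) ^ (-(1:ℝ)/2) * (√(2 * π * σ ^ 2))⁻¹)
          * (exp (-b ^ 2 / (2 * (l ^ 2 + σ ^ 2)))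
            * (1 / l ^ 2 * √(π / ((l ^ 2 + σ ^ 2) / (2 * σ ^ 2 * l ^ 2)))
              - 1 / l ^ 4 * ((1 / (2 * ((l ^ 2 + σ ^ 2) / (2 * σ ^ 2 * l ^ 2)))
                  + (σ ^ 2 / (l ^ 2 + σ ^ 2) * b - b) ^ 2)
                * √(π / ((l ^ 2 + σ ^ 2) / (2 * σ ^ 2 * l ^ 2)))))))
        = (((2 * π * l ^ 2) ^ (-(1:ℝ)/2) * (√(2 * π * σ ^ 2))⁻¹)
            * (1 / l ^ 2 * √(π / ((l ^ 2 + σ ^ 2) / (2 * σ ^ 2 * l ^ 2)))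
              - 1 / l ^ 4 * ((1 / (2 * ((l ^ 2 + σ ^ 2) / (2 * σ ^ 2 * l ^ 2)))
                  + (σ ^ 2 / (l ^ 2 + σ ^ 2) * b - b) ^ 2)
                * √(π / ((l ^ 2 + σ ^ 2) / (2 * σ ^ 2 * l ^ 2))))))
          * (gaussianPDFReal 0 (Real.toNNReal (σ ^ 2)) b
            * exp (-b ^ 2 / (2 * (l ^ 2 + σ ^ 2)))) := by ring
    rw [hfac, pdf_mul_exp2 hσ hl b]
    ring
  simp_rw [hpt2]
  rw [integral_sub ((integrable_exp_neg_mul_sq hS).const_mul _)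
    ((integrable_sq_mul_gauss hS).const_mul _)]
  rw [integral_const_mul, integral_const_mul, integral_gaussian, integral_sq_mul_gauss hS]
  have hσ' : σ ≠ 0 := hσ.ne'
  have hl' : l ≠ 0 := hl.ne'
  have h7 : (l ^ 2 + σ ^ 2) ≠ 0 := by positivity
  have h6 : (l ^ 2 + 2 * σ ^ 2) ≠ 0 := by positivity
  have key : (1 / l ^ 2 - 1 / l ^ 4 * (1 / (2 * ((l ^ 2 + σ ^ 2) / (2 * σ ^ 2 * l ^ 2)))))
      - (1 / l ^ 4 * (σ ^ 2 / (l ^ 2 + σ ^ 2) - 1) ^ 2)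
        / (2 * ((l ^ 2 + 2 * σ ^ 2) / (2 * σ ^ 2 * (l ^ 2 + σ ^ 2))))
      = (l ^ 2 + 2 * σ ^ 2)⁻¹ := by
    field_simp
    ring
  have hnb := numeric_base hσ hl
  linear_combination (1 / l ^ 2 - 1 / l ^ 4 * (1 / (2 * ((l ^ 2 + σ ^ 2) / (2 * σ ^ 2 * l ^ 2))))
      - (1 / l ^ 4 * (σ ^ 2 / (l ^ 2 + σ ^ 2) - 1) ^ 2)
        / (2 * ((l ^ 2 + 2 * σ ^ 2) / (2 * σ ^ 2 * (l ^ 2 + σ ^ 2))))) * hnb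
    + ((2 * π) ^ (-(1:ℝ)/2) * (l ^ 2 + 2 * σ ^ 2) ^ (-(1:ℝ)/2)) * key

end OneD

lemma rpow_neg_half_pow {x : ℝ} (hx : 0 ≤ x) (n : ℕ) :
    (x ^ (-(1:ℝ)/2)) ^ n = x ^ (-(n:ℝ)/2) := by
  rw [← Real.rpow_natCast (x ^ (-(1:ℝ)/2)) n, ← Real.rpow_mul hx]
  congr 1
  push_cast
  ring

lemma prod_exp_gauss (d : ℕ) {l : ℝ} (hl : 0 < l) (w : Fin d → ℝ) :
    ∏ k, ((2 * π * l ^ 2) ^ (-(1:ℝ)/2) * exp (-(w k) ^ 2 / (2 * l ^ 2)))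
      = (2 * π * l ^ 2) ^ (-(d:ℝ)/2) * exp (-(∑ k, (w k) ^ 2) / (2 * l ^ 2)) := by
  have hπ := Real.pi_pos
  rw [Finset.prod_mul_distrib, Finset.prod_const, ← Real.exp_sum]
  congr 1
  · rw [Finset.card_univ, Fintype.card_fin, rpow_neg_half_pow (by positivity) d]
  · simp only [neg_div]
    rw [Finset.sum_neg_distrib, ← Finset.sum_div]

lemma final_arith {σ l : ℝ} (hσ : 0 < σ) (hl : 0 < l) {d : ℕ} (hd : 1 ≤ d) :
    ((2 * π) ^ (-(1:ℝ)/2) * (l ^ 2 + 2 * σ ^ 2) ^ (-(1:ℝ)/2) * (l ^ 2 + 2 * σ ^ 2)⁻¹)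
        * ((2 * π) ^ (-(1:ℝ)/2) * (l ^ 2 + 2 * σ ^ 2) ^ (-(1:ℝ)/2)) ^ (d - 1)
      = (2 * π) ^ (-(d:ℝ)/2) * (l ^ 2 + 2 * σ ^ 2) ^ (-(d:ℝ)/2 - 1) := by
  have hπ := Real.pi_pos
  have h2π : (0:ℝ) < 2 * π := by positivity
  have hL : (0:ℝ) < l ^ 2 + 2 * σ ^ 2 := by positivity
  rw [mul_pow, rpow_neg_half_pow h2π.le (d - 1), rpow_neg_half_pow hL.le (d - 1)]
  have c1 : (2 * π : ℝ) ^ (-(1:ℝ)/2) * (2 * π) ^ (-((d - 1 : ℕ) : ℝ)/2)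
      = (2 * π) ^ (-(d:ℝ)/2) := by
    rw [← Real.rpow_add h2π]
    congr 1
    rw [Nat.cast_sub hd]
    push_cast
    ring
  have c2 : (l ^ 2 + 2 * σ ^ 2 : ℝ) ^ (-(1:ℝ)/2) * (l ^ 2 + 2 * σ ^ 2)⁻¹
        * (l ^ 2 + 2 * σ ^ 2) ^ (-((d - 1 : ℕ) : ℝ)/2)
      = (l ^ 2 + 2 * σ ^ 2) ^ (-(d:ℝ)/2 - 1) := by
    rw [← Real.rpow_neg_one (l ^ 2 + 2 * σ ^ 2), ← Real.rpow_add hL, ← Real.rpow_add hL]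
    congr 1
    rw [Nat.cast_sub hd]
    push_cast
    ring
  calc ((2 * π) ^ (-(1:ℝ)/2) * (l ^ 2 + 2 * σ ^ 2) ^ (-(1:ℝ)/2) * (l ^ 2 + 2 * σ ^ 2)⁻¹)
        * ((2 * π) ^ (-((d - 1 : ℕ) : ℝ)/2) * (l ^ 2 + 2 * σ ^ 2) ^ (-((d - 1 : ℕ) : ℝ)/2))
      = ((2 * π : ℝ) ^ (-(1:ℝ)/2) * (2 * π) ^ (-((d - 1 : ℕ) : ℝ)/2))
        * ((l ^ 2 + 2 * σ ^ 2 : ℝ) ^ (-(1:ℝ)/2) * (l ^ 2 + 2 * σ ^ 2)⁻¹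
          * (l ^ 2 + 2 * σ ^ 2) ^ (-((d - 1 : ℕ) : ℝ)/2)) := by ring
    _ = _ := by rw [c1, c2]


/-- For the Gaussian location model `P_θ = N(θ, σ² I_d)` with generator
`G_θ(u) = u + θ`, base measure `U = N(0, σ² I_d)` (so `∇_θ G_θ = I`), and
Gaussian kernel of lengthscale `l`, the MMD information metric tensor
`g(θ)_{ij} = ∫∫ (∂_{x_i}∂_{y_j} k)(u+θ, v+θ) dU(u) dU(v)` equals
`(2π)^{-d/2} (l² + 2σ²)^{-d/2-1} I_{d×d}` at every `θ`. -/
theorem gaussian_location_metric_tensor (d : ℕ) (σ l : ℝ)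
    (hσ : 0 < σ) (hl : 0 < l) (θ : Fin d → ℝ) (i j : Fin d) :
    (∫ v, ∫ u, gaussKernelMixedDeriv d l (u + θ) (v + θ) i j
        ∂(Measure.pi fun _ : Fin d => gaussianReal 0 (Real.toNNReal (σ ^ 2)))
        ∂(Measure.pi fun _ : Fin d => gaussianReal 0 (Real.toNNReal (σ ^ 2))))
      = (2 * Real.pi) ^ (-(d : ℝ) / 2) * (l ^ 2 + 2 * σ ^ 2) ^ (-(d : ℝ) / 2 - 1)
          * (if i = j then 1 else 0) := by
  have hl' : l ≠ 0 := hl.ne'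
  have hd1 : 1 ≤ d := i.pos
  by_cases hij : i = j
  · subst hij
    rw [if_pos rfl, mul_one]
    have hpt : ∀ u v : Fin d → ℝ, gaussKernelMixedDeriv d l (u + θ) (v + θ) i i
        = ∏ k, ((if k = i then 1 / l ^ 2 - (u k - v k) ^ 2 / l ^ 4 else 1)
            * ((2 * π * l ^ 2) ^ (-(1:ℝ)/2) * exp (-(u k - v k) ^ 2 / (2 * l ^ 2)))) := by
      intro u v
      rw [mixedDeriv_eq d hl' (u + θ) (v + θ) i i, if_pos rfl,
        Finset.prod_mul_distrib, Finset.prod_ite_eq', prod_exp_gauss d hl (fun k => u k - v k)]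
      simp only [Finset.mem_univ, if_true]
      unfold gaussKernel
      simp only [Pi.add_apply]
      have harg : ∀ k : Fin d, u k + θ k - (v k + θ k) = u k - v k := fun k => by ring
      simp_rw [harg]
      ring
    have h1 : (∫ v, ∫ u, gaussKernelMixedDeriv d l (u + θ) (v + θ) i i
          ∂(Measure.pi fun _ : Fin d => gaussianReal 0 (Real.toNNReal (σ ^ 2)))
          ∂(Measure.pi fun _ : Fin d => gaussianReal 0 (Real.toNNReal (σ ^ 2))))
        = ∫ v : Fin d → ℝ, ∏ k, (∫ a, ((if k = i then 1 / l ^ 2 - (a - v k) ^ 2 / l ^ 4 else 1)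
              * ((2 * π * l ^ 2) ^ (-(1:ℝ)/2) * exp (-(a - v k) ^ 2 / (2 * l ^ 2)))) ∂(Gm σ))
            ∂(Measure.pi fun _ : Fin d => gaussianReal 0 (Real.toNNReal (σ ^ 2))) := by
      refine integral_congr_ae (Filter.Eventually.of_forall fun v => ?_)
      dsimp only
      rw [show (fun u : Fin d → ℝ => gaussKernelMixedDeriv d l (u + θ) (v + θ) i i)
          = fun u => ∏ k, ((if k = i then 1 / l ^ 2 - (u k - v k) ^ 2 / l ^ 4 else 1)
              * ((2 * π * l ^ 2) ^ (-(1:ℝ)/2) * exp (-(u k - v k) ^ 2 / (2 * l ^ 2))))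
        from funext fun u => hpt u v]
      exact integral_pi_prod (Gm σ) (fun k a => ((if k = i then 1 / l ^ 2 - (a - v k) ^ 2 / l ^ 4 else 1)
          * ((2 * π * l ^ 2) ^ (-(1:ℝ)/2) * exp (-(a - v k) ^ 2 / (2 * l ^ 2)))))
    rw [h1]
    have h2 : (∫ v : Fin d → ℝ, ∏ k, (∫ a, ((if k = i then 1 / l ^ 2 - (a - v k) ^ 2 / l ^ 4 else 1)
              * ((2 * π * l ^ 2) ^ (-(1:ℝ)/2) * exp (-(a - v k) ^ 2 / (2 * l ^ 2)))) ∂(Gm σ))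
            ∂(Measure.pi fun _ : Fin d => gaussianReal 0 (Real.toNNReal (σ ^ 2))))
        = ∏ k, ∫ b, (∫ a, ((if k = i then 1 / l ^ 2 - (a - b) ^ 2 / l ^ 4 else 1)
              * ((2 * π * l ^ 2) ^ (-(1:ℝ)/2) * exp (-(a - b) ^ 2 / (2 * l ^ 2)))) ∂(Gm σ)) ∂(Gm σ) :=
      integral_pi_prod (Gm σ) (fun k b => ∫ a, ((if k = i then 1 / l ^ 2 - (a - b) ^ 2 / l ^ 4 else 1)
          * ((2 * π * l ^ 2) ^ (-(1:ℝ)/2) * exp (-(a - b) ^ 2 / (2 * l ^ 2)))) ∂(Gm σ))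
    rw [h2]
    have hJ : ∀ k : Fin d, (∫ b, (∫ a, ((if k = i then 1 / l ^ 2 - (a - b) ^ 2 / l ^ 4 else 1)
            * ((2 * π * l ^ 2) ^ (-(1:ℝ)/2) * exp (-(a - b) ^ 2 / (2 * l ^ 2)))) ∂(Gm σ)) ∂(Gm σ))
        = if k = i then (2 * π) ^ (-(1:ℝ)/2) * (l ^ 2 + 2 * σ ^ 2) ^ (-(1:ℝ)/2)
              * (l ^ 2 + 2 * σ ^ 2)⁻¹
          else (2 * π) ^ (-(1:ℝ)/2) * (l ^ 2 + 2 * σ ^ 2) ^ (-(1:ℝ)/2) := by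
      intro k
      by_cases hk : k = i
      · subst hk
        rw [if_pos rfl]
        simp only [eq_self_iff_true, if_true]
        exact Jii hσ hl
      · rw [if_neg hk]
        simp only [hk, if_false, one_mul]
        exact Jbase hσ hl
    rw [Finset.prod_congr rfl fun k _ => hJ k,
      Finset.prod_eq_mul_prod_sdiff_singleton_of_mem (Finset.mem_univ i), if_pos rfl]
    have hrest : (∏ k ∈ Finset.univ \ {i},
          (if k = i then (2 * π) ^ (-(1:ℝ)/2) * (l ^ 2 + 2 * σ ^ 2) ^ (-(1:ℝ)/2)
              * (l ^ 2 + 2 * σ ^ 2)⁻¹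
            else (2 * π) ^ (-(1:ℝ)/2) * (l ^ 2 + 2 * σ ^ 2) ^ (-(1:ℝ)/2)))
        = ((2 * π) ^ (-(1:ℝ)/2) * (l ^ 2 + 2 * σ ^ 2) ^ (-(1:ℝ)/2)) ^ (d - 1) := by
      rw [Finset.prod_congr rfl (fun k hk => if_neg (by
        simp only [Finset.mem_sdiff, Finset.mem_singleton] at hk
        exact hk.2)), Finset.prod_const,
        Finset.card_sdiff_of_subset (Finset.singleton_subset_iff.mpr (Finset.mem_univ i)),
        Finset.card_univ, Fintype.card_fin, Finset.card_singleton]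
    rw [hrest]
    exact final_arith hσ hl hd1
  · rw [if_neg hij, mul_zero]
    have hpt : ∀ u v : Fin d → ℝ, gaussKernelMixedDeriv d l (u + θ) (v + θ) i j
        = ∏ k, ((if k = i then (u k - v k) / l ^ 2
              else if k = j then -((u k - v k) / l ^ 2) else 1)
            * ((2 * π * l ^ 2) ^ (-(1:ℝ)/2) * exp (-(u k - v k) ^ 2 / (2 * l ^ 2)))) := by
      intro u v
      rw [mixedDeriv_eq d hl' (u + θ) (v + θ) i j, if_neg hij,
        Finset.prod_mul_distrib, prod_exp_gauss d hl (fun k => u k - v k)]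
      have hprod : (∏ k, (if k = i then (u k - v k) / l ^ 2
            else if k = j then -((u k - v k) / l ^ 2) else 1))
          = ((u i - v i) / l ^ 2) * (-((u j - v j) / l ^ 2)) := by
        rw [Finset.prod_eq_mul_prod_sdiff_singleton_of_mem (Finset.mem_univ i), if_pos rfl]
        have hji : j ≠ i := fun h => hij h.symm
        have hjmem : j ∈ Finset.univ \ ({i} : Finset (Fin d)) := by
          simp only [Finset.mem_sdiff, Finset.mem_univ, Finset.mem_singleton, true_and]
          exact hji
        rw [Finset.prod_eq_mul_prod_sdiff_singleton_of_mem hjmem, if_neg hji, if_pos rfl]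
        have hone : (∏ k ∈ (Finset.univ \ {i}) \ {j}, (if k = i then (u k - v k) / l ^ 2
            else if k = j then -((u k - v k) / l ^ 2) else 1)) = 1 := by
          refine Finset.prod_eq_one fun k hk => ?_
          simp only [Finset.mem_sdiff, Finset.mem_singleton, Finset.mem_univ, true_and] at hk
          rw [if_neg hk.1, if_neg hk.2]
        rw [hone]
        ring
      rw [hprod]
      unfold gaussKernel
      simp only [Pi.add_apply]
      have harg : ∀ k : Fin d, u k + θ k - (v k + θ k) = u k - v k := fun k => by ring
      simp_rw [harg]
      ring
    have h1 : (∫ v, ∫ u, gaussKernelMixedDeriv d l (u + θ) (v + θ) i j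
          ∂(Measure.pi fun _ : Fin d => gaussianReal 0 (Real.toNNReal (σ ^ 2)))
          ∂(Measure.pi fun _ : Fin d => gaussianReal 0 (Real.toNNReal (σ ^ 2))))
        = ∫ v : Fin d → ℝ, ∏ k, (∫ a, ((if k = i then (a - v k) / l ^ 2
              else if k = j then -((a - v k) / l ^ 2) else 1)
              * ((2 * π * l ^ 2) ^ (-(1:ℝ)/2) * exp (-(a - v k) ^ 2 / (2 * l ^ 2)))) ∂(Gm σ))
            ∂(Measure.pi fun _ : Fin d => gaussianReal 0 (Real.toNNReal (σ ^ 2))) := by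
      refine integral_congr_ae (Filter.Eventually.of_forall fun v => ?_)
      dsimp only
      rw [show (fun u : Fin d → ℝ => gaussKernelMixedDeriv d l (u + θ) (v + θ) i j)
          = fun u => ∏ k, ((if k = i then (u k - v k) / l ^ 2
              else if k = j then -((u k - v k) / l ^ 2) else 1)
              * ((2 * π * l ^ 2) ^ (-(1:ℝ)/2) * exp (-(u k - v k) ^ 2 / (2 * l ^ 2))))
        from funext fun u => hpt u v]
      exact integral_pi_prod (Gm σ) (fun k a => ((if k = i then (a - v k) / l ^ 2
          else if k = j then -((a - v k) / l ^ 2) else 1)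
          * ((2 * π * l ^ 2) ^ (-(1:ℝ)/2) * exp (-(a - v k) ^ 2 / (2 * l ^ 2)))))
    rw [h1]
    have h2 : (∫ v : Fin d → ℝ, ∏ k, (∫ a, ((if k = i then (a - v k) / l ^ 2
              else if k = j then -((a - v k) / l ^ 2) else 1)
              * ((2 * π * l ^ 2) ^ (-(1:ℝ)/2) * exp (-(a - v k) ^ 2 / (2 * l ^ 2)))) ∂(Gm σ))
            ∂(Measure.pi fun _ : Fin d => gaussianReal 0 (Real.toNNReal (σ ^ 2))))
        = ∏ k, ∫ b, (∫ a, ((if k = i then (a - b) / l ^ 2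
              else if k = j then -((a - b) / l ^ 2) else 1)
              * ((2 * π * l ^ 2) ^ (-(1:ℝ)/2) * exp (-(a - b) ^ 2 / (2 * l ^ 2)))) ∂(Gm σ)) ∂(Gm σ) :=
      integral_pi_prod (Gm σ) (fun k b => ∫ a, ((if k = i then (a - b) / l ^ 2
          else if k = j then -((a - b) / l ^ 2) else 1)
          * ((2 * π * l ^ 2) ^ (-(1:ℝ)/2) * exp (-(a - b) ^ 2 / (2 * l ^ 2)))) ∂(Gm σ))
    rw [h2]
    refine Finset.prod_eq_zero (Finset.mem_univ i) ?_
    simp only [eq_self_iff_true, if_true]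
    exact Jzero hσ hl
end

section
/- The function h(r) = 2 e^{-1/2} √(l² + σ²) ((l² + 2σ²)/(l² + σ²))^{d/2 + 1} equals the supremum over z ∈ R^d of the Euclidean norm of the influence function IF(z, P_θ) = 2 ((l²+2σ²)/(l²+σ²))^{d/2+1} exp(-||z-θ||²/(2(l²+σ²))) (z-θ). Moreover, as l → ∞, IF(z, P_θ) converges pointwise to 2(z - θ). -/
open Filter Finset

private lemma aux_max (s r : ℝ) (hs : 0 < s) (hr : 0 ≤ r) :
    r * Real.exp (-(r ^ 2) / (2 * s ^ 2)) ≤ s * Real.exp (-(1 : ℝ) / 2) := by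
  have h1 : r ≤ s * Real.exp (r ^ 2 / (2 * s ^ 2) - 1 / 2) := by
    have h2 := Real.add_one_le_exp (r ^ 2 / (2 * s ^ 2) - 1 / 2)
    have h3 : r ^ 2 / (2 * s ^ 2) + 1 / 2 ≤ Real.exp (r ^ 2 / (2 * s ^ 2) - 1 / 2) := by
      linarith
    have h5 : r ≤ s * (r ^ 2 / (2 * s ^ 2) + 1 / 2) := by
      rw [show s * (r ^ 2 / (2 * s ^ 2) + 1 / 2) = (r ^ 2 + s ^ 2) / (2 * s) by
        field_simp]
      rw [le_div_iff₀ (by positivity)]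
      nlinarith [sq_nonneg (r - s)]
    nlinarith [mul_le_mul_of_nonneg_left h3 hs.le]
  calc r * Real.exp (-(r ^ 2) / (2 * s ^ 2))
      ≤ (s * Real.exp (r ^ 2 / (2 * s ^ 2) - 1 / 2)) * Real.exp (-(r ^ 2) / (2 * s ^ 2)) :=
        mul_le_mul_of_nonneg_right h1 (Real.exp_pos _).le
    _ = s * Real.exp (-(1 : ℝ) / 2) := by
        rw [mul_assoc, ← Real.exp_add]
        congr 1
        ring

/-- Gross-error sensitivity of the minimum MMD estimator for the Gaussian
location model: the supremum over `z ∈ ℝᵈ` of the Euclidean norm of the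
influence function
`IF(z,P_θ) = 2((l²+2σ²)/(l²+σ²))^{d/2+1} exp(−‖z−θ‖²/(2(l²+σ²)))(z−θ)`
equals `2e^{-1/2}√(l²+σ²)((l²+2σ²)/(l²+σ²))^{d/2+1}`; moreover as `l → ∞`,
`IF(z,P_θ)` converges pointwise to `2(z−θ)`. -/
theorem gaussian_location_gross_error_sensitivity (d : ℕ) (hd : 1 ≤ d)
    (σ l : ℝ) (hσ : 0 < σ) (hl : 0 < l) (θ : Fin d → ℝ)
    (IF : ℝ → (Fin d → ℝ) → Fin d → ℝ)
    (hIF : ∀ (l' : ℝ) (z : Fin d → ℝ) (i : Fin d),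
      IF l' z i = 2 * ((l' ^ 2 + 2 * σ ^ 2) / (l' ^ 2 + σ ^ 2)) ^ ((d : ℝ) / 2 + 1)
        * Real.exp (-(∑ j, (z j - θ j) ^ 2) / (2 * (l' ^ 2 + σ ^ 2)))
        * (z i - θ i)) :
    IsLUB (Set.range fun z : Fin d → ℝ => Real.sqrt (∑ i, (IF l z i) ^ 2))
        (2 * Real.exp (-(1 : ℝ) / 2) * Real.sqrt (l ^ 2 + σ ^ 2)
          * ((l ^ 2 + 2 * σ ^ 2) / (l ^ 2 + σ ^ 2)) ^ ((d : ℝ) / 2 + 1))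
    ∧ ∀ (z : Fin d → ℝ) (i : Fin d),
        Tendsto (fun l' => IF l' z i) atTop (nhds (2 * (z i - θ i))) := by
  have ha : 0 < l ^ 2 + σ ^ 2 := by positivity
  set q : ℝ := ((l ^ 2 + 2 * σ ^ 2) / (l ^ 2 + σ ^ 2)) ^ ((d : ℝ) / 2 + 1) with hq
  have hqpos : 0 < q := Real.rpow_pos_of_pos (by positivity) _
  set s : ℝ := Real.sqrt (l ^ 2 + σ ^ 2) with hsdef
  have hspos : 0 < s := Real.sqrt_pos.mpr ha
  have hs2 : s ^ 2 = l ^ 2 + σ ^ 2 := Real.sq_sqrt ha.le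
  -- norm formula
  have key : ∀ z : Fin d → ℝ,
      Real.sqrt (∑ i, (IF l z i) ^ 2)
        = 2 * q * Real.exp (-(∑ j, (z j - θ j) ^ 2) / (2 * s ^ 2))
            * Real.sqrt (∑ j, (z j - θ j) ^ 2) := by
    intro z
    have hcalc : (∑ i, (IF l z i) ^ 2)
        = (2 * q * Real.exp (-(∑ j, (z j - θ j) ^ 2) / (2 * s ^ 2))) ^ 2
            * (∑ j, (z j - θ j) ^ 2) := by
      rw [Finset.mul_sum]
      refine Finset.sum_congr rfl fun i _ => ?_
      rw [hIF, hs2]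
      ring
    rw [hcalc, Real.sqrt_mul (sq_nonneg _), Real.sqrt_sq (by positivity)]
  constructor
  · apply IsGreatest.isLUB
    constructor
    · -- attained
      refine ⟨fun j => θ j + (if j = ⟨0, hd⟩ then s else 0), ?_⟩
      simp only []
      rw [key]
      have hsum : (∑ j, ((θ j + (if j = (⟨0, hd⟩ : Fin d) then s else 0)) - θ j) ^ 2)
          = s ^ 2 := by
        have : ∀ j : Fin d, ((θ j + (if j = (⟨0, hd⟩ : Fin d) then s else 0)) - θ j) ^ 2
            = if j = (⟨0, hd⟩ : Fin d) then s ^ 2 else 0 := by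
          intro j; split <;> simp
        simp only [this, Finset.sum_ite_eq', Finset.mem_univ, if_true]
      rw [hsum]
      have : -(s ^ 2) / (2 * s ^ 2) = -(1 : ℝ) / 2 := by
        field_simp
      rw [this, Real.sqrt_sq hspos.le]
      ring
    · -- upper bound
      rintro x ⟨z, rfl⟩
      simp only []
      rw [key]
      have hS : (0 : ℝ) ≤ ∑ j, (z j - θ j) ^ 2 := by positivity
      have hb := aux_max s (Real.sqrt (∑ j, (z j - θ j) ^ 2)) hspos (Real.sqrt_nonneg _)
      rw [Real.sq_sqrt hS] at hb
      calc 2 * q * Real.exp (-(∑ j, (z j - θ j) ^ 2) / (2 * s ^ 2))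
              * Real.sqrt (∑ j, (z j - θ j) ^ 2)
          = (2 * q) * (Real.sqrt (∑ j, (z j - θ j) ^ 2)
              * Real.exp (-(∑ j, (z j - θ j) ^ 2) / (2 * s ^ 2))) := by ring
        _ ≤ (2 * q) * (s * Real.exp (-(1 : ℝ) / 2)) := by
            exact mul_le_mul_of_nonneg_left hb (by positivity)
        _ = 2 * Real.exp (-(1 : ℝ) / 2) * s * q := by ring
  · intro z i
    have hS : (0 : ℝ) ≤ ∑ j, (z j - θ j) ^ 2 := by positivity
    have h1 : Tendsto (fun l' : ℝ => l' ^ 2 + σ ^ 2) atTop atTop :=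
      tendsto_atTop_add_const_right atTop (σ ^ 2) (tendsto_pow_atTop two_ne_zero)
    have hinv : Tendsto (fun l' : ℝ => (l' ^ 2 + σ ^ 2)⁻¹) atTop (nhds 0) :=
      h1.inv_tendsto_atTop
    have h2 : Tendsto (fun l' : ℝ => (l' ^ 2 + 2 * σ ^ 2) / (l' ^ 2 + σ ^ 2))
        atTop (nhds 1) := by
      have heq : ∀ l' : ℝ, (l' ^ 2 + 2 * σ ^ 2) / (l' ^ 2 + σ ^ 2)
          = 1 + σ ^ 2 * (l' ^ 2 + σ ^ 2)⁻¹ := by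
        intro l'
        have : (0:ℝ) < l' ^ 2 + σ ^ 2 := by positivity
        field_simp
        ring
      simp only [heq]
      have h0 : Tendsto (fun l' : ℝ => 1 + σ ^ 2 * (l' ^ 2 + σ ^ 2)⁻¹) atTop
          (nhds (1 + σ ^ 2 * 0)) := tendsto_const_nhds.add (hinv.const_mul _)
      simpa using h0
    have h3 : Tendsto (fun l' : ℝ =>
        ((l' ^ 2 + 2 * σ ^ 2) / (l' ^ 2 + σ ^ 2)) ^ ((d : ℝ) / 2 + 1)) atTop (nhds 1) := by
      have := h2.rpow_const (p := (d : ℝ) / 2 + 1) (Or.inl one_ne_zero)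
      simpa using this
    have h4 : Tendsto (fun l' : ℝ =>
        Real.exp (-(∑ j, (z j - θ j) ^ 2) / (2 * (l' ^ 2 + σ ^ 2)))) atTop (nhds 1) := by
      have heq : ∀ l' : ℝ, -(∑ j, (z j - θ j) ^ 2) / (2 * (l' ^ 2 + σ ^ 2))
          = (-(∑ j, (z j - θ j) ^ 2) / 2) * (l' ^ 2 + σ ^ 2)⁻¹ := by
        intro l'
        have hx : (0:ℝ) < l' ^ 2 + σ ^ 2 := by positivity
        field_simp
      simp only [heq]
      have hx : Tendsto (fun l' : ℝ => (-(∑ j, (z j - θ j) ^ 2) / 2) * (l' ^ 2 + σ ^ 2)⁻¹)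
          atTop (nhds 0) := by
        simpa using hinv.const_mul (-(∑ j, (z j - θ j) ^ 2) / 2)
      rw [← Real.exp_zero]; exact (Real.continuous_exp.tendsto 0).comp hx
    have hc2 : Tendsto (fun _ : ℝ => (2:ℝ)) atTop (nhds 2) := tendsto_const_nhds
    have hfin : Tendsto (fun l' : ℝ =>
        2 * ((l' ^ 2 + 2 * σ ^ 2) / (l' ^ 2 + σ ^ 2)) ^ ((d : ℝ) / 2 + 1)
          * Real.exp (-(∑ j, (z j - θ j) ^ 2) / (2 * (l' ^ 2 + σ ^ 2))) * (z i - θ i))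
        atTop (nhds (2 * 1 * 1 * (z i - θ i))) :=
      ((hc2.mul h3).mul h4).mul tendsto_const_nhds
    simp only [hIF]
    convert hfin using 2
    ring
end

section
/- Define E(d) = ((1 + 4s d^{-2α} + 3s² d^{-4α}) / (1 + 4s d^{-2α} + 4s² d^{-4α}))^{-d/2} for fixed s > 0 and α > 0. Then as d → ∞: E(d) → 1 if α > 1/4, E(d) → e^{s²/2} if α = 1/4, and E(d) → +∞ if α < 1/4. -/
open Filter

/-- Critical scaling limits for the Gaussian scale model: with
`E(d) = ((1 + 4s d^{-2α} + 3s² d^{-4α})/(1 + 4s d^{-2α} + 4s² d^{-4α}))^{-d/2}`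
for fixed `s > 0` and `α > 0`, as `d → ∞`: `E(d) → 1` if `α > 1/4`,
`E(d) → e^{s²/2}` if `α = 1/4`, and `E(d) → +∞` if `α < 1/4`. -/
theorem gaussian_scale_critical_scaling (s α : ℝ) (hs : 0 < s) (hα : 0 < α)
    (E : ℕ → ℝ)
    (hE : ∀ d : ℕ, E d =
        ((1 + 4 * s * (d : ℝ) ^ (-(2 * α)) + 3 * s ^ 2 * (d : ℝ) ^ (-(4 * α))) /
         (1 + 4 * s * (d : ℝ) ^ (-(2 * α)) + 4 * s ^ 2 * (d : ℝ) ^ (-(4 * α))))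
          ^ (-(d : ℝ) / 2)) :
    (α > 1 / 4 → Tendsto E atTop (nhds 1))
    ∧ (α = 1 / 4 → Tendsto E atTop (nhds (Real.exp (s ^ 2 / 2))))
    ∧ (α < 1 / 4 → Tendsto E atTop atTop) := by
  set x : ℕ → ℝ := fun d => (d : ℝ) ^ (-(2 * α)) with hxdef
  set N : ℕ → ℝ := fun d => 1 + 4 * s * x d + 3 * s ^ 2 * (x d) ^ 2 with hNdef
  set D : ℕ → ℝ := fun d => 1 + 4 * s * x d + 4 * s ^ 2 * (x d) ^ 2 with hDdef
  set g : ℕ → ℝ := fun d => N d / D d with hgdef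
  set A : ℕ → ℝ := fun d => Real.log (g d) / (g d - 1) with hAdef
  set L : ℕ → ℝ := fun d => s ^ 2 / 2 * (d : ℝ) ^ (1 - 4 * α) * (A d / D d) with hLdef
  have hcast : Tendsto (fun d : ℕ => (d : ℝ)) atTop atTop :=
    tendsto_natCast_atTop_atTop
  have hx0 : Tendsto x atTop (nhds 0) :=
    (tendsto_rpow_neg_atTop (by positivity : (0:ℝ) < 2 * α)).comp hcast
  have hD0 : Tendsto D atTop (nhds 1) := by
    have : Tendsto (fun d => 1 + 4 * s * x d + 4 * s ^ 2 * (x d) ^ 2) atTop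
        (nhds (1 + 4 * s * 0 + 4 * s ^ 2 * 0 ^ 2)) :=
      (tendsto_const_nhds.add (tendsto_const_nhds.mul hx0)).add
        (tendsto_const_nhds.mul (hx0.pow 2))
    simpa using this
  have hN0 : Tendsto N atTop (nhds 1) := by
    have : Tendsto (fun d => 1 + 4 * s * x d + 3 * s ^ 2 * (x d) ^ 2) atTop
        (nhds (1 + 4 * s * 0 + 3 * s ^ 2 * 0 ^ 2)) :=
      (tendsto_const_nhds.add (tendsto_const_nhds.mul hx0)).add
        (tendsto_const_nhds.mul (hx0.pow 2))
    simpa using this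
  have hg1 : Tendsto g atTop (nhds 1) := by
    have h := hN0.div hD0 one_ne_zero
    rw [div_one] at h
    exact h
  -- facts for d ≥ 1
  have hfacts : ∀ d : ℕ, 1 ≤ d →
      0 < x d ∧ 0 < N d ∧ 0 < D d ∧ 0 < g d ∧ g d < 1 := by
    intro d hd
    have hdpos : (0:ℝ) < (d:ℝ) := by exact_mod_cast hd
    have hxpos : 0 < x d := Real.rpow_pos_of_pos hdpos _
    have hNpos : 0 < N d := by have := hxpos; simp only [hNdef]; positivity
    have hDpos : 0 < D d := by have := hxpos; simp only [hDdef]; positivity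
    have hNltD : N d < D d := by
      have h1 : 0 < s ^ 2 * (x d) ^ 2 := by positivity
      simp only [hNdef, hDdef]; nlinarith
    exact ⟨hxpos, hNpos, hDpos, div_pos hNpos hDpos,
      (div_lt_one hDpos).mpr hNltD⟩
  -- g tends to 1 within the punctured neighborhood
  have hg1' : Tendsto g atTop (nhdsWithin 1 {(1:ℝ)}ᶜ) := by
    rw [tendsto_nhdsWithin_iff]
    refine ⟨hg1, ?_⟩
    filter_upwards [eventually_ge_atTop 1] with d hd
    exact ne_of_lt (hfacts d hd).2.2.2.2
  -- slope of log at 1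
  have hslope : Tendsto (fun y : ℝ => Real.log y / (y - 1)) (nhdsWithin 1 {(1:ℝ)}ᶜ)
      (nhds 1) := by
    have h := Real.hasDerivAt_log one_ne_zero
    rw [hasDerivAt_iff_tendsto_slope] at h
    have h' : Tendsto (slope Real.log 1) (nhdsWithin 1 {(1:ℝ)}ᶜ) (nhds 1) := by
      simpa using h
    refine h'.congr fun y => ?_
    rw [slope_def_field, Real.log_one, sub_zero]
  have hA1 : Tendsto A atTop (nhds 1) := hslope.comp hg1'
  have hAD : Tendsto (fun d => A d / D d) atTop (nhds 1) := by
    have h := hA1.div hD0 one_ne_zero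
    rw [div_one] at h
    exact h
  -- eventual identity E d = exp (L d)
  have hEq : E =ᶠ[atTop] fun d => Real.exp (L d) := by
    filter_upwards [eventually_ge_atTop 1] with d hd
    obtain ⟨hxpos, hNpos, hDpos, hgpos, hglt⟩ := hfacts d hd
    have hdpos : (0:ℝ) < (d:ℝ) := by exact_mod_cast hd
    have hx2 : (d : ℝ) ^ (-(4 * α)) = (x d) ^ 2 := by
      rw [sq, hxdef, ← Real.rpow_add hdpos]
      ring_nf
    have hEd : E d = g d ^ (-(d : ℝ) / 2) := by
      rw [hE d, hx2]
    have hgne : g d - 1 ≠ 0 := sub_ne_zero.mpr (ne_of_lt hglt)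
    have hlog : Real.log (g d) = A d * (g d - 1) :=
      (div_mul_cancel₀ _ hgne).symm
    have hgsub : g d - 1 = -(s ^ 2 * (x d) ^ 2) / D d := by
      rw [hgdef]
      field_simp
      simp only [hNdef, hDdef]
      ring
    have hd14 : (d : ℝ) ^ (1 - 4 * α) = (d : ℝ) * (x d) ^ 2 := by
      rw [← hx2, show (1 - 4 * α) = 1 + -(4 * α) by ring,
        Real.rpow_add hdpos, Real.rpow_one]
    rw [hEd, Real.rpow_def_of_pos hgpos]
    congr 1
    rw [hLdef]
    simp only
    rw [hlog, hd14, hgsub]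
    field_simp
  refine ⟨?_, ?_, ?_⟩
  · -- α > 1/4
    intro h
    have hr : Tendsto (fun d : ℕ => (d : ℝ) ^ (1 - 4 * α)) atTop (nhds 0) := by
      have h0 : (0:ℝ) < 4 * α - 1 := by linarith
      have := (tendsto_rpow_neg_atTop h0).comp hcast
      simp only [show -(4 * α - 1) = 1 - 4 * α from by ring] at this
      exact this
    have hL : Tendsto L atTop (nhds 0) := by
      have := (hr.const_mul (s ^ 2 / 2)).mul hAD
      simpa using this
    have := (Real.continuous_exp.tendsto 0).comp hL
    have h2 : Tendsto (fun d => Real.exp (L d)) atTop (nhds 1) := by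
      rw [Real.exp_zero] at this
      exact this
    exact h2.congr' hEq.symm
  · -- α = 1/4
    intro h
    subst h
    have hL : Tendsto L atTop (nhds (s ^ 2 / 2)) := by
      have hLeq : L = fun d => s ^ 2 / 2 * (A d / D d) := by
        funext d
        rw [hLdef]
        norm_num
      rw [hLeq]
      simpa using tendsto_const_nhds.mul hAD
    have := (Real.continuous_exp.tendsto (s ^ 2 / 2)).comp hL
    exact Tendsto.congr' hEq.symm this
  · -- α < 1/4
    intro h
    have hr : Tendsto (fun d : ℕ => (d : ℝ) ^ (1 - 4 * α)) atTop atTop :=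
      (tendsto_rpow_atTop (by linarith : (0:ℝ) < 1 - 4 * α)).comp hcast
    have hc : Tendsto (fun d : ℕ => s ^ 2 / 2 * (d : ℝ) ^ (1 - 4 * α)) atTop atTop :=
      (tendsto_const_mul_atTop_of_pos (by positivity : (0:ℝ) < s ^ 2 / 2)).mpr hr
    have hL : Tendsto L atTop atTop := hc.atTop_mul_pos one_pos hAD
    exact Tendsto.congr' hEq.symm (Real.tendsto_exp_atTop.comp hL)
end
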